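/- −1 ≤ r ≤ 1; that is, −1 ≤ 6·E[F(X,Y) − H(X)·G(Y)] ≤ 1. -/

import Mathlib

open MeasureTheory Set

namespace RAux

variable {α : Type*} [MeasurableSpace α]

noncomputable def ind (S : Set α) : α → ℝ := S.indicator (fun _ => (1:ℝ))

lemma ind_of_mem {S : Set α} {a : α} (h : a ∈ S) : ind S a = 1 := Set.indicator_of_mem h _
lemma ind_of_not_mem {S : Set α} {a : α} (h : a ∉ S) : ind S a = 0 := Set.indicator_of_notMem h _
lemma ind_abs_le (S : Set α) (a : α) : |ind S a| ≤ 1 := by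
  by_cases h : a ∈ S
  · rw [ind_of_mem h]; norm_num
  · rw [ind_of_not_mem h]; norm_num

lemma ind_measurable {S : Set α} (hS : MeasurableSet S) : Measurable (ind S) :=
  (measurable_const (a := (1:ℝ))).indicator hS

/-- Integrability of bounded measurable functions on finite measure spaces. -/
lemma integrable_of_bdd {μ : Measure α} [IsFiniteMeasure μ] {f : α → ℝ} {C : ℝ}
    (hf : Measurable f) (hC : ∀ a, |f a| ≤ C) : Integrable f μ :=
  ⟨hf.aestronglyMeasurable, HasFiniteIntegral.of_bounded (C := C)
    (Filter.Eventually.of_forall fun a => by simpa using hC a)⟩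

lemma ind_integrable {μ : Measure α} [IsFiniteMeasure μ] {S : Set α} (hS : MeasurableSet S) :
    Integrable (ind S) μ :=
  integrable_of_bdd (ind_measurable hS) (ind_abs_le S)

/-- Integral of an indicator. -/
lemma integral_ind {μ : Measure α} [IsFiniteMeasure μ] {S : Set α} (hS : MeasurableSet S) :
    ∫ a, ind S a ∂μ = (μ S).toReal := by
  rw [ind, integral_indicator hS]
  simp
  rfl

/-- Expansion of the centered product integral. -/
lemma inner_expand {μ : Measure α} [IsProbabilityMeasure μ]
    {A B : Set α} (hA : MeasurableSet A) (hB : MeasurableSet B) :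
    ∫ ω, (ind A ω - (μ A).toReal) * (ind B ω - (μ B).toReal) ∂μ
      = (μ (A ∩ B)).toReal - (μ A).toReal * (μ B).toReal := by
  set a := (μ A).toReal with ha
  set b := (μ B).toReal with hb
  have key : ∀ ω, (ind A ω - a) * (ind B ω - b)
      = ind (A ∩ B) ω - b * ind A ω - a * ind B ω + a * b := by
    intro ω
    by_cases h1 : ω ∈ A <;> by_cases h2 : ω ∈ B
    · rw [ind_of_mem h1, ind_of_mem h2, ind_of_mem (Set.mem_inter h1 h2)]; ring
    · rw [ind_of_mem h1, ind_of_not_mem h2,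
        ind_of_not_mem (fun h => h2 h.2)]; ring
    · rw [ind_of_not_mem h1, ind_of_mem h2,
        ind_of_not_mem (fun h => h1 h.1)]; ring
    · rw [ind_of_not_mem h1, ind_of_not_mem h2,
        ind_of_not_mem (fun h => h1 h.1)]; ring
  have iA : Integrable (ind A) μ := ind_integrable hA
  have iB : Integrable (ind B) μ := ind_integrable hB
  have iAB : Integrable (ind (A ∩ B)) μ := ind_integrable (hA.inter hB)
  have i1 : Integrable (fun ω => ind (A ∩ B) ω - b * ind A ω) μ := by
    exact iAB.sub (iA.const_mul b)
  have i2 : Integrable (fun ω => ind (A ∩ B) ω - b * ind A ω - a * ind B ω) μ := by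
    exact i1.sub (iB.const_mul a)
  simp only [key]
  rw [integral_add i2 (integrable_const _), integral_sub i1 (iB.const_mul a),
    integral_sub iAB (iA.const_mul b), integral_const_mul, integral_const_mul,
    integral_ind (hA.inter hB), integral_ind hA, integral_ind hB, integral_const]
  simp only [probReal_univ, measure_univ, ENNReal.toReal_one, smul_eq_mul, one_mul]
  ring

end RAux

namespace RAux
open Function

section CDF
variable (ν : Measure ℝ) [IsProbabilityMeasure ν]

noncomputable def c (ν : Measure ℝ) : ℝ → ℝ := fun x => (ν (Iic x)).toReal

lemma c_mono : Monotone (c ν) := fun x y h =>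
  ENNReal.toReal_mono (measure_ne_top ν _) (measure_mono (Iic_subset_Iic.2 h))

lemma c_meas : Measurable (c ν) := (c_mono ν).measurable

lemma c_nonneg (x : ℝ) : 0 ≤ c ν x := ENNReal.toReal_nonneg

lemma c_le_one (x : ℝ) : c ν x ≤ 1 := by
  have := prob_le_one (μ := ν) (s := Iic x)
  simpa [c] using ENNReal.toReal_mono ENNReal.one_ne_top this

lemma c_abs_le (x : ℝ) : |c ν x| ≤ 1 := by
  rw [abs_of_nonneg (c_nonneg ν x)]; exact c_le_one ν x

lemma c_integrable : Integrable (c ν) ν := integrable_of_bdd (c_meas ν) (c_abs_le ν)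

lemma c_sq_integrable : Integrable (fun x => c ν x ^ 2) ν :=
  integrable_of_bdd (C := 1) ((c_meas ν).pow_const 2) (fun x => by
    have h1 := c_nonneg ν x; have h2 := c_le_one ν x
    rw [abs_of_nonneg (by positivity)]; nlinarith)

/-- Fubini swap for bounded measurable functions on a probability product. -/
lemma fub (f : ℝ → ℝ → ℝ) (hm : Measurable (uncurry f)) (hb : ∀ p q, |f p q| ≤ 1) :
    ∫ x, ∫ y, f x y ∂ν ∂ν = ∫ y, ∫ x, f x y ∂ν ∂ν :=
  integral_integral_swap (integrable_of_bdd hm (fun q => hb q.1 q.2))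

def S : Set (ℝ × ℝ) := {q | q.2 ≤ q.1}

lemma S_meas : MeasurableSet S := measurableSet_le measurable_snd measurable_fst

omit [IsProbabilityMeasure ν] in
lemma ind_S_left (x : ℝ) : (fun y => ind S (x, y)) = ind (Iic x) := by
  funext y
  by_cases h : y ≤ x
  · rw [ind_of_mem (show (x,y) ∈ S from h), ind_of_mem (show y ∈ Iic x from h)]
  · rw [ind_of_not_mem (show (x,y) ∉ S from h), ind_of_not_mem (show y ∉ Iic x from h)]

variable {ν}

lemma iio_eq (hat : ∀ a : ℝ, ν {a} = 0) (y : ℝ) : ν (Iio y) = ν (Iic y) := by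
  have hu : Iio y ∪ {y} = Iic y := by
    ext z; simp [le_iff_lt_or_eq]
  rw [← hu, measure_union (by simp) (measurableSet_singleton y), hat y, add_zero]

lemma ci_eq (hat : ∀ a : ℝ, ν {a} = 0) (y : ℝ) : (ν (Ici y)).toReal = 1 - c ν y := by
  rw [← compl_Iio, measure_compl measurableSet_Iio (measure_ne_top ν _), measure_univ,
    iio_eq hat, ENNReal.toReal_sub_of_le prob_le_one ENNReal.one_ne_top]
  simp [c]

lemma int_ind_S_right (hat : ∀ a : ℝ, ν {a} = 0) (y : ℝ) :
    ∫ x, ind S (x, y) ∂ν = 1 - c ν y := by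
  have : (fun x => ind S (x, y)) = ind (Ici y) := by
    funext x
    by_cases h : y ≤ x
    · rw [ind_of_mem (show (x,y) ∈ S from h), ind_of_mem (show x ∈ Ici y from h)]
    · rw [ind_of_not_mem (show (x,y) ∉ S from h), ind_of_not_mem (show x ∉ Ici y from h)]
  rw [this, integral_ind measurableSet_Ici, ci_eq hat]

end CDF

end RAux

namespace RAux
open Function

section CDF2
variable {ν : Measure ℝ} [IsProbabilityMeasure ν]

def S' : Set (ℝ × ℝ) := {q | q.1 < q.2}

lemma S'_meas : MeasurableSet S' := measurableSet_lt measurable_fst measurable_snd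

lemma abs_mul_le_one {a b : ℝ} (ha : |a| ≤ 1) (hb : |b| ≤ 1) : |a * b| ≤ 1 := by
  rw [abs_mul]
  calc |a| * |b| ≤ 1 * 1 := by
        exact mul_le_mul ha hb (abs_nonneg b) zero_le_one
    _ = 1 := by ring

lemma int_c (hat : ∀ a : ℝ, ν {a} = 0) : ∫ x, c ν x ∂ν = 1/2 := by
  have h1 : ∀ x, ∫ y, ind S (x, y) ∂ν = c ν x := by
    intro x
    rw [show (fun y => ind S (x, y)) = ind (Iic x) from ind_S_left x,
      integral_ind measurableSet_Iic]
    rfl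
  have h2 : ∫ x, ∫ y, ind S (x, y) ∂ν ∂ν = ∫ y, ∫ x, ind S (x, y) ∂ν ∂ν :=
    fub ν (fun x y => ind S (x, y)) (by exact ind_measurable S_meas)
      (fun p q => ind_abs_le _ _)
  have h3 : ∫ y, ∫ x, ind S (x, y) ∂ν ∂ν = ∫ y, (1 - c ν y) ∂ν := by
    exact congrArg (integral ν) (funext fun y => int_ind_S_right hat y)
  have h4 : ∫ y, (1 - c ν y) ∂ν = 1 - ∫ y, c ν y ∂ν := by
    rw [integral_sub (integrable_const 1) (c_integrable ν), integral_const]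
    simp
  have h5 : ∫ x, ∫ y, ind S (x, y) ∂ν ∂ν = ∫ x, c ν x ∂ν :=
    congrArg (integral ν) (funext h1)
  linarith [h2, h3, h4, h5]

end CDF2
end RAux

namespace RAux
open Function

section CDF3
variable {ν : Measure ℝ} [IsProbabilityMeasure ν]

lemma ind_S'_right (z : ℝ) : (fun y => ind S' (y, z)) = ind (Iio z) := by
  funext y
  by_cases h : y < z
  · rw [ind_of_mem (show (y,z) ∈ S' from h), ind_of_mem (show y ∈ Iio z from h)]
  · rw [ind_of_not_mem (show (y,z) ∉ S' from h), ind_of_not_mem (show y ∉ Iio z from h)]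

lemma phi_eq (hat : ∀ a : ℝ, ν {a} = 0) (x : ℝ) :
    ∫ y, ind (Iic x) y * c ν y ∂ν = c ν x ^ 2 / 2 := by
  -- step 1 : c x ^ 2 as a double integral
  have s1 : c ν x ^ 2 = ∫ y, ind (Iic x) y * c ν x ∂ν := by
    rw [integral_mul_const, integral_ind measurableSet_Iic]
    rw [sq]; rfl
  have s2 : ∀ y, ind (Iic x) y * c ν x = ∫ z, ind (Iic x) y * ind (Iic x) z ∂ν := by
    intro y
    rw [integral_const_mul, integral_ind measurableSet_Iic]
    rfl
  -- step 3 : pointwise decomposition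
  have s3 : ∀ y z, ind (Iic x) y * ind (Iic x) z
      = ind (Iic x) y * ind (Iic y) z + ind (Iic x) z * ind S' (y, z) := by
    intro y z
    by_cases hzy : z ≤ y
    · rw [ind_of_mem (show z ∈ Iic y from hzy),
        ind_of_not_mem (show (y,z) ∉ S' from not_lt.2 hzy)]
      by_cases hyx : y ≤ x
      · rw [ind_of_mem (show y ∈ Iic x from hyx), ind_of_mem (show z ∈ Iic x from hzy.trans hyx)]
        ring
      · rw [ind_of_not_mem (show y ∉ Iic x from hyx)]; ring
    · have hyz : y < z := not_le.1 hzy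
      rw [ind_of_not_mem (show z ∉ Iic y from hzy), ind_of_mem (show (y,z) ∈ S' from hyz)]
      by_cases hzx : z ≤ x
      · rw [ind_of_mem (show z ∈ Iic x from hzx),
          ind_of_mem (show y ∈ Iic x from (hyz.le.trans hzx))]
        ring
      · rw [ind_of_not_mem (show z ∉ Iic x from hzx)]; ring
  -- integrability of the second piece on the product
  have hBmeas : Measurable (uncurry fun y z => ind (Iic x) z * ind S' (y, z)) := by
    exact ((ind_measurable measurableSet_Iic).comp measurable_snd).mul
      ((ind_measurable S'_meas).comp measurable_id)
  have hBint : Integrable (uncurry fun y z => ind (Iic x) z * ind S' (y, z)) (ν.prod ν) :=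
    integrable_of_bdd (C := 1) hBmeas
      (fun q => abs_mul_le_one (ind_abs_le _ _) (ind_abs_le _ _))
  -- step 4 : split the double integral
  have s4 : ∀ y, ∫ z, (ind (Iic x) y * ind (Iic y) z + ind (Iic x) z * ind S' (y, z)) ∂ν
      = ind (Iic x) y * c ν y + ∫ z, ind (Iic x) z * ind S' (y, z) ∂ν := by
    intro y
    have iA : Integrable (fun z => ind (Iic x) y * ind (Iic y) z) ν :=
      (ind_integrable measurableSet_Iic).const_mul _
    have iB : Integrable (fun z => ind (Iic x) z * ind S' (y, z)) ν :=
      integrable_of_bdd (C := 1)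
        ((ind_measurable measurableSet_Iic).mul
          ((ind_measurable S'_meas).comp (measurable_const.prodMk measurable_id)))
        (fun z => abs_mul_le_one (ind_abs_le _ _) (ind_abs_le _ _))
    rw [integral_add iA iB, integral_const_mul, integral_ind measurableSet_Iic]
    rfl
  -- the swapped second piece equals Φ(x)
  have s5 : ∫ y, ∫ z, ind (Iic x) z * ind S' (y, z) ∂ν ∂ν
      = ∫ y, ind (Iic x) y * c ν y ∂ν := by
    rw [fub ν (fun y z => ind (Iic x) z * ind S' (y, z)) hBmeas
      (fun p q => abs_mul_le_one (ind_abs_le _ _) (ind_abs_le _ _))]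
    refine congrArg (integral ν) (funext fun z => ?_)
    have : ∀ y', ind (Iic x) z * ind S' (y', z) = ind (Iic x) z * ind (Iio z) y' := by
      intro y'
      rw [show ind S' (y', z) = ind (Iio z) y' from congrFun (ind_S'_right z) y']
    simp only [this]
    rw [integral_const_mul, integral_ind measurableSet_Iio, iio_eq hat z]
    rfl
  -- combine
  have comb : c ν x ^ 2 = ∫ y, ind (Iic x) y * c ν y ∂ν
      + ∫ y, ∫ z, ind (Iic x) z * ind S' (y, z) ∂ν ∂ν := by
    rw [s1]
    simp only [s2, s3]
    rw [show (fun y => ∫ z, (ind (Iic x) y * ind (Iic y) z + ind (Iic x) z * ind S' (y, z)) ∂ν)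
        = (fun y => ind (Iic x) y * c ν y + ∫ z, ind (Iic x) z * ind S' (y, z) ∂ν)
      from funext s4]
    have iOuter : Integrable (fun y => ∫ z, ind (Iic x) z * ind S' (y, z) ∂ν) ν := by
      exact hBint.integral_prod_left
    rw [integral_add (f := fun y => ind (Iic x) y * c ν y)
      (integrable_of_bdd (C := 1)
        ((ind_measurable measurableSet_Iic).mul (c_meas ν))
        (fun y => abs_mul_le_one (ind_abs_le _ _) (c_abs_le ν _)))
      iOuter]
  rw [s5] at comb
  linarith [comb]

lemma int_c_sq (hat : ∀ a : ℝ, ν {a} = 0) : ∫ x, c ν x ^ 2 ∂ν = 1/3 := by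
  have hm : Measurable (uncurry fun x y => ind S (x, y) * c ν y) :=
    (ind_measurable S_meas).mul ((c_meas ν).comp measurable_snd)
  have hb : ∀ p q, |ind S (p, q) * c ν q| ≤ 1 :=
    fun p q => abs_mul_le_one (ind_abs_le _ _) (c_abs_le ν _)
  -- LHS evaluation via phi_eq
  have h1 : ∫ x, ∫ y, ind S (x, y) * c ν y ∂ν ∂ν = ∫ x, c ν x ^ 2 / 2 ∂ν := by
    refine congrArg (integral ν) (funext fun x => ?_)
    have : (fun y => ind S (x, y) * c ν y) = (fun y => ind (Iic x) y * c ν y) := by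
      funext y
      rw [show ind S (x, y) = ind (Iic x) y from congrFun (ind_S_left x) y]
    rw [this, phi_eq hat]
  -- RHS evaluation via swap
  have h2 : ∫ x, ∫ y, ind S (x, y) * c ν y ∂ν ∂ν = ∫ y, (1 - c ν y) * c ν y ∂ν := by
    rw [fub ν (fun x y => ind S (x, y) * c ν y) hm hb]
    refine congrArg (integral ν) (funext fun y => ?_)
    rw [integral_mul_const, int_ind_S_right hat]
  have h3 : ∫ x, c ν x ^ 2 / 2 ∂ν = (∫ x, c ν x ^ 2 ∂ν) / 2 := by
    rw [integral_div]
  have h4 : ∫ y, (1 - c ν y) * c ν y ∂ν = ∫ y, c ν y ∂ν - ∫ y, c ν y ^ 2 ∂ν := by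
    have : (fun y => (1 - c ν y) * c ν y) = (fun y => c ν y - c ν y ^ 2) := by
      funext y; ring
    rw [this, integral_sub (c_integrable ν) (c_sq_integrable ν)]
  have h5 := int_c hat
  linarith [h1, h2, h3, h4]

lemma int_c_sub_sq (hat : ∀ a : ℝ, ν {a} = 0) :
    ∫ x, (c ν x - c ν x ^ 2) ∂ν = 1/6 := by
  rw [integral_sub (c_integrable ν) (c_sq_integrable ν), int_c hat, int_c_sq hat]
  norm_num

end CDF3
end RAux


open MeasureTheory ProbabilityTheory Set RAux Function

lemma abs_mul_le {a b A B : ℝ} (ha : |a| ≤ A) (hb : |b| ≤ B) : |a * b| ≤ A * B := by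
  rw [abs_mul]
  exact mul_le_mul ha hb (abs_nonneg b) ((abs_nonneg a).trans ha)

theorem neg_one_le_r_and_r_le_one
    {Ω : Type*} [MeasurableSpace Ω] {μ : Measure Ω} [IsProbabilityMeasure μ]
    (X Y : Ω → ℝ) (hX : Measurable X) (hY : Measurable Y)
    (F : ℝ → ℝ → ℝ) (H G : ℝ → ℝ)
    (hF : ∀ x y, F x y = (μ {ω | X ω ≤ x ∧ Y ω ≤ y}).toReal)
    (hH : ∀ x, H x = (μ {ω | X ω ≤ x}).toReal)
    (hG : ∀ y, G y = (μ {ω | Y ω ≤ y}).toReal)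
    (habs : Measure.map (fun ω => (X ω, Y ω)) μ ≪ (volume : Measure (ℝ × ℝ))) :
    -1 ≤ 6 * ∫ ω, (F (X ω) (Y ω) - H (X ω) * G (Y ω)) ∂μ ∧
      6 * ∫ ω, (F (X ω) (Y ω) - H (X ω) * G (Y ω)) ∂μ ≤ 1 := by
  -- marginal laws
  set ν : Measure ℝ := μ.map X with hν
  set ρ : Measure ℝ := μ.map Y with hρ
  haveI : IsProbabilityMeasure ν := Measure.isProbabilityMeasure_map hX.aemeasurable
  haveI : IsProbabilityMeasure ρ := Measure.isProbabilityMeasure_map hY.aemeasurable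
  -- no atoms for the marginals
  have hatX : ∀ a : ℝ, ν {a} = 0 := by
    intro a
    have h0 : (volume : Measure (ℝ × ℝ)) (({a} : Set ℝ) ×ˢ (univ : Set ℝ)) = 0 := by
      rw [Measure.volume_eq_prod, Measure.prod_prod]
      simp
    have h1 := habs h0
    rw [Measure.map_apply (hX.prodMk hY) ((measurableSet_singleton a).prod MeasurableSet.univ)]
      at h1
    rw [hν, Measure.map_apply hX (measurableSet_singleton a)]
    convert h1 using 2
    ext ω
    simp [eq_comm]
  have hatY : ∀ a : ℝ, ρ {a} = 0 := by
    intro a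
    have h0 : (volume : Measure (ℝ × ℝ)) ((univ : Set ℝ) ×ˢ ({a} : Set ℝ)) = 0 := by
      rw [Measure.volume_eq_prod, Measure.prod_prod]
      simp
    have h1 := habs h0
    rw [Measure.map_apply (hX.prodMk hY) (MeasurableSet.univ.prod (measurableSet_singleton a))]
      at h1
    rw [hρ, Measure.map_apply hY (measurableSet_singleton a)]
    convert h1 using 2
    ext ω
    simp [eq_comm]
  -- identify H and G with the cdfs of the marginals
  have hHc : H = c ν := by
    funext x
    rw [hH, c, hν, Measure.map_apply hX measurableSet_Iic]
    rfl
  have hGc : G = c ρ := by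
    funext y
    rw [hG, c, hρ, Measure.map_apply hY measurableSet_Iic]
    rfl
  have hHmeas : Measurable H := hHc ▸ c_meas ν
  have hGmeas : Measurable G := hGc ▸ c_meas ρ
  have hHabs : ∀ x, |H x| ≤ 1 := fun x => hHc ▸ c_abs_le ν x
  have hGabs : ∀ y, |G y| ≤ 1 := fun y => hGc ▸ c_abs_le ρ y
  -- the centered indicator functions on the product space
  set SX : Set (Ω × Ω) := {p | X p.2 ≤ X p.1} with hSX
  set SY : Set (Ω × Ω) := {p | Y p.2 ≤ Y p.1} with hSY
  have hSXm : MeasurableSet SX := measurableSet_le (hX.comp measurable_snd) (hX.comp measurable_fst)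
  have hSYm : MeasurableSet SY := measurableSet_le (hY.comp measurable_snd) (hY.comp measurable_fst)
  set g : Ω × Ω → ℝ := fun p => ind SX p - H (X p.1) with hg
  set k : Ω × Ω → ℝ := fun p => ind SY p - G (Y p.1) with hk
  have hgmeas : Measurable g :=
    (ind_measurable hSXm).sub (hHmeas.comp (hX.comp measurable_fst))
  have hkmeas : Measurable k :=
    (ind_measurable hSYm).sub (hGmeas.comp (hY.comp measurable_fst))
  have hgabs : ∀ p, |g p| ≤ 2 := by
    intro p
    calc |g p| ≤ |ind SX p| + |H (X p.1)| := abs_sub _ _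
      _ ≤ 1 + 1 := add_le_add (ind_abs_le _ _) (hHabs _)
      _ = 2 := by norm_num
  have hkabs : ∀ p, |k p| ≤ 2 := by
    intro p
    calc |k p| ≤ |ind SY p| + |G (Y p.1)| := abs_sub _ _
      _ ≤ 1 + 1 := add_le_add (ind_abs_le _ _) (hGabs _)
      _ = 2 := by norm_num
  -- integrability of products
  have igk : Integrable (fun p => g p * k p) (μ.prod μ) :=
    integrable_of_bdd (C := 4) (hgmeas.mul hkmeas)
      (fun p => le_trans (abs_mul_le (hgabs p) (hkabs p)) (by norm_num))
  have igg : Integrable (fun p => g p * g p) (μ.prod μ) :=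
    integrable_of_bdd (C := 4) (hgmeas.mul hgmeas)
      (fun p => le_trans (abs_mul_le (hgabs p) (hgabs p)) (by norm_num))
  have ikk : Integrable (fun p => k p * k p) (μ.prod μ) :=
    integrable_of_bdd (C := 4) (hkmeas.mul hkmeas)
      (fun p => le_trans (abs_mul_le (hkabs p) (hkabs p)) (by norm_num))
  -- ind of the product sections
  have hindX : ∀ ω ω', ind SX (ω, ω') = ind {ω' | X ω' ≤ X ω} ω' := by
    intro ω ω'
    by_cases h : X ω' ≤ X ω
    · rw [ind_of_mem (show (ω, ω') ∈ SX from h), ind_of_mem (show ω' ∈ _ from h)]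
    · rw [ind_of_not_mem (show (ω, ω') ∉ SX from h), ind_of_not_mem (show ω' ∉ _ from h)]
  have hindY : ∀ ω ω', ind SY (ω, ω') = ind {ω' | Y ω' ≤ Y ω} ω' := by
    intro ω ω'
    by_cases h : Y ω' ≤ Y ω
    · rw [ind_of_mem (show (ω, ω') ∈ SY from h), ind_of_mem (show ω' ∈ _ from h)]
    · rw [ind_of_not_mem (show (ω, ω') ∉ SY from h), ind_of_not_mem (show ω' ∉ _ from h)]
  -- main identity : ∫ g·k = I
  have Egk : ∫ p, g p * k p ∂(μ.prod μ)
      = ∫ ω, (F (X ω) (Y ω) - H (X ω) * G (Y ω)) ∂μ := by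
    rw [integral_prod _ igk]
    refine congrArg (integral μ) (funext fun ω => ?_)
    have hA : MeasurableSet {ω' | X ω' ≤ X ω} := measurableSet_le hX measurable_const
    have hB : MeasurableSet {ω' | Y ω' ≤ Y ω} := measurableSet_le hY measurable_const
    have e1 : ∀ ω', g (ω, ω') * k (ω, ω')
        = (ind {ω' | X ω' ≤ X ω} ω' - (μ {ω' | X ω' ≤ X ω}).toReal)
          * (ind {ω' | Y ω' ≤ Y ω} ω' - (μ {ω' | Y ω' ≤ Y ω}).toReal) := by
      intro ω'
      rw [hg, hk]
      simp only
      rw [hindX ω ω', hindY ω ω', hH (X ω), hG (Y ω)]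
    simp only [e1]
    rw [inner_expand hA hB, hF (X ω) (Y ω), hH (X ω), hG (Y ω)]
    congr 2
  -- second moment identities
  have Egg : ∫ p, g p * g p ∂(μ.prod μ) = (1 : ℝ)/6 := by
    rw [integral_prod _ igg]
    have step : ∀ ω, ∫ ω', g (ω, ω') * g (ω, ω') ∂μ = c ν (X ω) - c ν (X ω) ^ 2 := by
      intro ω
      have hA : MeasurableSet {ω' | X ω' ≤ X ω} := measurableSet_le hX measurable_const
      have e1 : ∀ ω', g (ω, ω') * g (ω, ω')
          = (ind {ω' | X ω' ≤ X ω} ω' - (μ {ω' | X ω' ≤ X ω}).toReal)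
            * (ind {ω' | X ω' ≤ X ω} ω' - (μ {ω' | X ω' ≤ X ω}).toReal) := by
        intro ω'
        rw [hg]
        simp only
        rw [hindX ω ω', hH (X ω)]
      simp only [e1]
      rw [inner_expand hA hA, Set.inter_self]
      have : (μ {ω' | X ω' ≤ X ω}).toReal = c ν (X ω) := by
        rw [← hH (X ω), hHc]
      rw [this]; ring
    simp only [step]
    have : ∫ ω, (c ν (X ω) - c ν (X ω) ^ 2) ∂μ = ∫ x, (c ν x - c ν x ^ 2) ∂ν := by
      rw [hν, integral_map hX.aemeasurable]
      exact (((c_meas ν).sub ((c_meas ν).pow_const 2)).aestronglyMeasurable)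
    rw [this, int_c_sub_sq hatX]
  have Ekk : ∫ p, k p * k p ∂(μ.prod μ) = (1 : ℝ)/6 := by
    rw [integral_prod _ ikk]
    have step : ∀ ω, ∫ ω', k (ω, ω') * k (ω, ω') ∂μ = c ρ (Y ω) - c ρ (Y ω) ^ 2 := by
      intro ω
      have hB : MeasurableSet {ω' | Y ω' ≤ Y ω} := measurableSet_le hY measurable_const
      have e1 : ∀ ω', k (ω, ω') * k (ω, ω')
          = (ind {ω' | Y ω' ≤ Y ω} ω' - (μ {ω' | Y ω' ≤ Y ω}).toReal)
            * (ind {ω' | Y ω' ≤ Y ω} ω' - (μ {ω' | Y ω' ≤ Y ω}).toReal) := by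
        intro ω'
        rw [hk]
        simp only
        rw [hindY ω ω', hG (Y ω)]
      simp only [e1]
      rw [inner_expand hB hB, Set.inter_self]
      have : (μ {ω' | Y ω' ≤ Y ω}).toReal = c ρ (Y ω) := by
        rw [← hG (Y ω), hGc]
      rw [this]; ring
    simp only [step]
    have : ∫ ω, (c ρ (Y ω) - c ρ (Y ω) ^ 2) ∂μ = ∫ y, (c ρ y - c ρ y ^ 2) ∂ρ := by
      rw [hρ, integral_map hY.aemeasurable]
      exact (((c_meas ρ).sub ((c_meas ρ).pow_const 2)).aestronglyMeasurable)
    rw [this, int_c_sub_sq hatY]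
  -- quadratic trick
  have hsub : ∫ p, (g p - k p) ^ 2 ∂(μ.prod μ)
      = ∫ p, g p * g p ∂(μ.prod μ) - 2 * ∫ p, g p * k p ∂(μ.prod μ)
        + ∫ p, k p * k p ∂(μ.prod μ) := by
    have e : (fun p => (g p - k p) ^ 2)
        = fun p => g p * g p - 2 * (g p * k p) + k p * k p := by
      funext p; ring
    have i1 : Integrable (fun p => g p * g p - 2 * (g p * k p)) (μ.prod μ) := by
      exact igg.sub (igk.const_mul 2)
    have i2 : Integrable (fun p => 2 * (g p * k p)) (μ.prod μ) := by
      exact igk.const_mul 2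
    rw [e, integral_add i1 ikk, integral_sub igg i2, integral_const_mul]
  have hadd : ∫ p, (g p + k p) ^ 2 ∂(μ.prod μ)
      = ∫ p, g p * g p ∂(μ.prod μ) + 2 * ∫ p, g p * k p ∂(μ.prod μ)
        + ∫ p, k p * k p ∂(μ.prod μ) := by
    have e : (fun p => (g p + k p) ^ 2)
        = fun p => g p * g p + 2 * (g p * k p) + k p * k p := by
      funext p; ring
    have i1 : Integrable (fun p => g p * g p + 2 * (g p * k p)) (μ.prod μ) := by
      exact igg.add (igk.const_mul 2)
    have i2 : Integrable (fun p => 2 * (g p * k p)) (μ.prod μ) := by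
      exact igk.const_mul 2
    rw [e, integral_add i1 ikk, integral_add igg i2, integral_const_mul]
  have hs0 : 0 ≤ ∫ p, (g p - k p) ^ 2 ∂(μ.prod μ) :=
    integral_nonneg fun p => sq_nonneg _
  have ha0 : 0 ≤ ∫ p, (g p + k p) ^ 2 ∂(μ.prod μ) :=
    integral_nonneg fun p => sq_nonneg _
  rw [Egg, Ekk, Egk] at hsub hadd
  constructor <;> linarith
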